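/- There is no J ∈ C⁺(g) for which the forms e¹ + i·e³ and e⁴ + i·e² in ℂ⊗g* are both of type (1,0) for J. -/
import Mathlib


open scoped ComplexOrder

noncomputable section

/-- The underlying real vector space of the Lie algebra `g` (coordinates w.r.t. `E₁,…,E₆`). -/
abbrev GV : Type := Fin 6 → ℝ

/-- The basis vectors `E₁,…,E₆` (indexed by `0,…,5`). -/
def E (i : Fin 6) : GV := Pi.single i 1

/-- The Lie bracket of `g`: the only nonzero brackets of basis vectors are
`[E₁,E₃] = -E₅`, `[E₂,E₄] = E₅`, `[E₁,E₄] = -E₆`, `[E₂,E₃] = -E₆`. -/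
def br (X Y : GV) : GV :=
  ![0, 0, 0, 0,
    -(X 0 * Y 2 - X 2 * Y 0) + (X 1 * Y 3 - X 3 * Y 1),
    -(X 0 * Y 3 - X 3 * Y 0) - (X 1 * Y 2 - X 2 * Y 1)]

/-- `J` is a complex structure: `J ∘ J = -id`. -/
def IsCpxStr (J : Module.End ℝ GV) : Prop := ∀ x, J (J x) = -x

/-- Integrability (Newlander–Nirenberg) condition. -/
def Integrable (J : Module.End ℝ GV) : Prop :=
  ∀ X Y, br (J X) (J Y) = br X Y + J (br (J X) Y) + J (br X (J Y))

/-- `J` induces the standard orientation of `g`. -/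
def PosOrient (J : Module.End ℝ GV) : Prop :=
  ∃ v₁ v₂ v₃ : GV,
    0 < (Matrix.of fun i j => ![v₁, J v₁, v₂, J v₂, v₃, J v₃] i j).det

/-- `C⁺(g)`: integrable complex structures inducing the standard orientation. -/
def Cplus : Set (Module.End ℝ GV) := {J | IsCpxStr J ∧ Integrable J ∧ PosOrient J}

/-- The inner product making `E₁,…,E₆` orthonormal. -/
def inner6 (x y : GV) : ℝ := ∑ i, x i * y i

def IsOrthog (J : Module.End ℝ GV) : Prop := ∀ x y, inner6 (J x) (J y) = inner6 x y

/-- `C⁺(g,g)`: orthogonal members of `C⁺(g)`. -/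
def Cgg : Set (Module.End ℝ GV) := {J | J ∈ Cplus ∧ IsOrthog J}

lemma le46 : (4:ℕ) ≤ 6 := by norm_num

/-- Determinant of `(w̄₁, Ĵw̄₁, w̄₂, Ĵw̄₂)` w.r.t. the basis `(Ē₁,…,Ē₄)` of `g/[g,g]`
(the coordinates of the class of `v` are the first four coordinates of `v`). -/
def hatDet (J : Module.End ℝ GV) (w₁ w₂ : GV) : ℝ :=
  (Matrix.of fun (i : Fin 4) (j : Fin 4) =>
    ![w₁, J w₁, w₂, J w₂] i (Fin.castLE le46 j)).det

/-- `C₊`: members of `C⁺(g)` whose induced structure on `g/[g,g]` is positively oriented. -/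
def CplusP : Set (Module.End ℝ GV) :=
  {J | J ∈ Cplus ∧ ∃ w₁ w₂ : GV, 0 < hatDet J w₁ w₂}

/-- `C₋`: members of `C⁺(g)` whose induced structure on `g/[g,g]` is negatively oriented. -/
def CplusM : Set (Module.End ℝ GV) :=
  {J | J ∈ Cplus ∧ ∃ w₁ w₂ : GV, hatDet J w₁ w₂ < 0}

/-- `ℂ ⊗ g*`, identified with coordinate vectors with respect to the dual basis `e¹,…,e⁶`. -/
abbrev MC : Type := Fin 6 → ℂ

/-- Evaluation of a complexified 1-form on a vector of `g`. -/
def ev (α : MC) (v : GV) : ℂ := ∑ i, α i * v i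

/-- The dual basis `e¹,…,e⁶` inside `ℂ ⊗ g*`. -/
def eC (i : Fin 6) : MC := Pi.single i 1

def w1 : MC := eC 0 + Complex.I • eC 1
def w2 : MC := eC 2 + Complex.I • eC 3
def w3 : MC := eC 4 + Complex.I • eC 5
/-- `ω̄¹` -/
def w1b : MC := eC 0 - Complex.I • eC 1
/-- `ω̄²` -/
def w2b : MC := eC 2 - Complex.I • eC 3
/-- `ω̄³` -/
def w3b : MC := eC 4 - Complex.I • eC 5

/-- The space of `(1,0)`-forms of `J`, a complex subspace of `ℂ ⊗ g*`. -/
def holSub (J : Module.End ℝ GV) : Submodule ℂ MC where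
  carrier := {α | ∀ v : GV, ev α (J v) = Complex.I * ev α v}
  add_mem' := by
    intro a b ha hb v
    simp only [ev, Pi.add_apply, add_mul, Finset.sum_add_distrib] at *
    rw [ha v, hb v]; ring
  zero_mem' := by intro v; simp [ev]
  smul_mem' := by
    intro c α hα v
    simp only [ev, Pi.smul_apply, smul_eq_mul, mul_assoc, ← Finset.mul_sum] at *
    rw [hα v]; ring
/-- `(α₁, α₂, α₃)` is a basis of the space of `(1,0)`-forms of `J`. -/
def IsHolBasis (J : Module.End ℝ GV) (α₁ α₂ α₃ : MC) : Prop :=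
  LinearIndependent ℂ ![α₁, α₂, α₃] ∧ Submodule.span ℂ {α₁, α₂, α₃} = holSub J

/-- Inclusion into the exterior algebra of `ℂ ⊗ g*`; wedge products are multiplications there. -/
def ι : MC →ₗ[ℂ] ExteriorAlgebra ℂ MC := ExteriorAlgebra.ι ℂ

/-- The standard bi-invariant complex structure `J₀`. -/
def J0 : Module.End ℝ GV :=
  Matrix.mulVecLin !![0,-1,0,0,0,0; 1,0,0,0,0,0; 0,0,0,-1,0,0;
                      0,0,1,0,0,0; 0,0,0,0,0,-1; 0,0,0,0,1,0]

/-- The vector space underlying `V = span(E₁,E₂,E₃,E₄)`. -/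
abbrev W4 : Type := Fin 4 → ℝ

/-- Inclusion `V = span(E₁,…,E₄) ↪ g`. -/
def incl (w : W4) : GV := fun i => if h : (i : ℕ) < 4 then w ⟨i, h⟩ else 0

def det4W (v : Fin 4 → W4) : ℝ := (Matrix.of fun i j => v i j).det

/-- The topology on the space of `ℝ`-linear endomorphisms of `g`
(as a subspace of the space of all maps `g → g`). -/
instance : TopologicalSpace (Module.End ℝ GV) :=
  TopologicalSpace.induced (fun f => (f : GV → GV)) inferInstance

/-- The span of `E₁,E₂,E₃,E₄`. -/
def V4span : Submodule ℝ GV := Submodule.span ℝ {E 0, E 1, E 2, E 3}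

/-- no `J ∈ C⁺(g)` has both `e¹ + i·e³` and `e⁴ + i·e²` as `(1,0)`-forms. -/
theorem stmt12 : ¬ ∃ J ∈ Cplus,
    (eC 0 + Complex.I • eC 2) ∈ holSub J ∧ (eC 3 + Complex.I • eC 1) ∈ holSub J := by
  rintro ⟨J, ⟨hJ, hint, -⟩, h1, h2⟩
  have e1 : ∀ v : GV, ((J v 0 : ℂ) + Complex.I * (J v 2))
      = Complex.I * ((v 0 : ℂ) + Complex.I * v 2) := by
    intro v
    simpa [ev, eC, Fin.sum_univ_six, Pi.single_apply] using h1 v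
  have e2 : ∀ v : GV, (Complex.I * (J v 1) + (J v 3 : ℂ))
      = Complex.I * (Complex.I * (v 1 : ℂ) + v 3) := by
    intro v
    simpa [ev, eC, Fin.sum_univ_six, Pi.single_apply] using h2 v
  have hJ0 : ∀ v : GV, J v 0 = -v 2 := fun v => by
    have := congrArg Complex.re (e1 v); simpa using this
  have hJ2 : ∀ v : GV, J v 2 = v 0 := fun v => by
    have := congrArg Complex.im (e1 v); simpa using this
  have hJ3 : ∀ v : GV, J v 3 = -v 1 := fun v => by
    have := congrArg Complex.re (e2 v); simpa using this
  have hJ1 : ∀ v : GV, J v 1 = v 3 := fun v => by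
    have := congrArg Complex.im (e2 v); simpa using this
  have hb1 : br (J (E 0)) (E 1) = E 5 := by
    funext i; fin_cases i <;>
      simp [br, E, hJ0, hJ1, hJ2, hJ3, Pi.single_apply, Matrix.cons_val_succ] <;> rfl
  have hb2 : br (E 0) (J (E 1)) = E 5 := by
    funext i; fin_cases i <;>
      simp [br, E, hJ0, hJ1, hJ2, hJ3, Pi.single_apply, Matrix.cons_val_succ] <;> rfl
  have hb3 : br (J (E 0)) (J (E 1)) = 0 := by
    funext i; fin_cases i <;>
      simp [br, E, hJ0, hJ1, hJ2, hJ3, Pi.single_apply, Matrix.cons_val_succ] <;> rfl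
  have hb4 : br (E 0) (E 1) = 0 := by
    funext i; fin_cases i <;> simp [br, E, Pi.single_apply, Matrix.cons_val_succ] <;> rfl
  have hint' := hint (E 0) (E 1)
  rw [hb1, hb2, hb3, hb4, zero_add] at hint'
  have hz : J (E 5) = 0 := by
    have h2 : (2 : ℝ) • J (E 5) = 0 := by
      rw [two_smul]; exact hint'.symm
    simpa using (smul_eq_zero.mp h2).resolve_left (by norm_num)
  have := hJ (E 5)
  rw [hz, map_zero] at this
  have := congrFun this 5
  simp [E, Pi.single_apply] at this

end
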